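/- arXiv:1806.05846 — 3 statements merged into one kernel-verified Lean document; each statement's English description precedes it below -/
import Mathlib

section
/- Let f : [0,∞) → [0,∞) be measurable, K ≥ 0, α ∈ (0,1), and suppose f(t) ≤ f(0) + K ∫₀ᵗ f(s)^{1-α} ds for all t ≥ 0. Then f(t) ≤ (f(0)^α + α K t)^{1/α} for all t ≥ 0. -/
open Real MeasureTheory intervalIntegral

private lemma stmt_3_aux (f : ℝ → ℝ) (hpos : ∀ t, 0 ≤ f t)
    (K : ℝ) (hK : 0 < K) (α : ℝ) (hα : α ∈ Set.Ioo (0 : ℝ) 1)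
    (hint : ∀ t : ℝ, 0 ≤ t → IntervalIntegrable (fun s => f s ^ (1 - α)) volume 0 t)
    (hle : ∀ t : ℝ, 0 ≤ t → f t ≤ f 0 + K * ∫ s in (0:ℝ)..t, f s ^ (1 - α))
    (e : ℝ) (he : 0 < e) (t : ℝ) (ht : 0 ≤ t) :
    f t ≤ ((f 0 + e) ^ α + α * K * t) ^ (1 / α) := by
  obtain ⟨hα0, hα1⟩ := hα
  have hf0 : 0 ≤ f 0 := hpos 0
  set b := (f 0 + e) ^ α with hbdef
  have hb : 0 < b := Real.rpow_pos_of_pos (by linarith) α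
  set F : ℝ → ℝ := fun x => ∫ s in (0:ℝ)..x, f s ^ (1 - α) with hF
  set φ : ℝ → ℝ := fun s => (b + α * K * s) ^ (1 / α) with hφdef
  set ψ : ℝ → ℝ := fun s => (φ s - f 0) / K with hψdef
  have hbase : ∀ s : ℝ, 0 ≤ s → 0 < b + α * K * s := by
    intro s hs
    have : 0 ≤ α * K * s := by positivity
    linarith
  have hφ0 : φ 0 = f 0 + e := by
    simp only [hφdef, mul_zero, add_zero]
    rw [hbdef, ← Real.rpow_mul (by linarith : (0:ℝ) ≤ f 0 + e),
      mul_one_div_cancel hα0.ne', Real.rpow_one]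
  have hψ0 : ψ 0 = e / K := by
    rw [hψdef]
    simp only [hφ0]
    ring
  have hexp : (1:ℝ) / α * (1 - α) = 1 / α - 1 := by field_simp
  have hφpow : ∀ s : ℝ, 0 ≤ s → φ s ^ (1 - α) = (b + α * K * s) ^ (1 / α - 1) := by
    intro s hs
    rw [hφdef, ← Real.rpow_mul (hbase s hs).le, hexp]
  have hcontRHS : ∀ m : ℝ, 0 ≤ m →
      IntervalIntegrable (fun s => (b + α * K * s) ^ (1 / α - 1)) volume 0 m := by
    intro m hm
    apply ContinuousOn.intervalIntegrable
    apply ContinuousOn.rpow_const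
    · exact (continuous_const.add (continuous_const.mul continuous_id)).continuousOn
    · intro x hx
      rw [Set.uIcc_of_le hm] at hx
      exact Or.inl (hbase x hx.1).ne'
  have hFTC : ∀ m : ℝ, 0 ≤ m →
      (∫ s in (0:ℝ)..m, (b + α * K * s) ^ (1 / α - 1)) = (φ m - φ 0) / K := by
    intro m hm
    have hderiv : ∀ x ∈ Set.uIcc (0:ℝ) m,
        HasDerivAt (fun s => φ s / K) ((b + α * K * x) ^ (1 / α - 1)) x := by
      intro x hx
      rw [Set.uIcc_of_le hm] at hx
      have hx0 : 0 < b + α * K * x := hbase x hx.1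
      have h1 : HasDerivAt (fun s : ℝ => b + α * K * s) (α * K) x := by
        simpa using ((hasDerivAt_id x).const_mul (α * K)).const_add b
      have h2 : HasDerivAt (fun y : ℝ => y ^ (1 / α))
          ((1 / α) * (b + α * K * x) ^ (1 / α - 1)) (b + α * K * x) :=
        Real.hasDerivAt_rpow_const (Or.inl hx0.ne')
      have h3 := (h2.comp x h1).div_const K
      exact h3.congr_deriv (by field_simp)
    rw [intervalIntegral.integral_eq_sub_of_hasDerivAt hderiv (hcontRHS m hm)]
    ring
  have key : ∀ s ∈ Set.Icc (0:ℝ) t, F s ≤ ψ s := by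
    by_contra hcon
    push_neg at hcon
    obtain ⟨s0, hs0, hs0'⟩ := hcon
    set S := {s ∈ Set.Icc (0:ℝ) t | ψ s ≤ F s} with hS
    have hFcont : ContinuousOn F (Set.Icc 0 t) := by
      have := intervalIntegral.continuousOn_primitive_interval' (hint t ht)
        (Set.left_mem_uIcc (a := (0:ℝ)) (b := t))
      rwa [Set.uIcc_of_le ht] at this
    have hψcont : ContinuousOn ψ (Set.Icc 0 t) := by
      apply ContinuousOn.div_const
      apply ContinuousOn.sub _ continuousOn_const
      apply ContinuousOn.rpow_const
        ((continuous_const.add (continuous_const.mul continuous_id)).continuousOn)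
      intro x hx
      exact Or.inl (hbase x hx.1).ne'
    have hScl : IsClosed S := by
      have hSeq : S = Set.Icc 0 t ∩ (fun s => F s - ψ s) ⁻¹' Set.Ici 0 := by
        ext s
        simp only [hS, Set.mem_setOf_eq, Set.mem_inter_iff, Set.mem_preimage, Set.mem_Ici,
          sub_nonneg]
      rw [hSeq]
      exact ContinuousOn.preimage_isClosed_of_isClosed (hFcont.sub hψcont) isClosed_Icc
        isClosed_Ici
    have hSne : S.Nonempty := ⟨s0, hs0, hs0'.le⟩
    have hSbdd : BddBelow S := ⟨0, fun x hx => hx.1.1⟩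
    set m := sInf S with hm
    have hmS : m ∈ S := hScl.csInf_mem hSne hSbdd
    have hm0 : 0 < m := by
      rcases hmS.1.1.lt_or_eq with h | h
      · exact h
      · exfalso
        have h2 := hmS.2
        rw [← h] at h2
        have hF0 : F 0 = 0 := intervalIntegral.integral_same
        rw [hF0, hψ0] at h2
        have : 0 < e / K := div_pos he hK
        linarith
    have hlt : ∀ s ∈ Set.Ico (0:ℝ) m, F s < ψ s := by
      intro s hs
      by_contra h
      push_neg at h
      have hsS : s ∈ S := ⟨⟨hs.1, hs.2.le.trans hmS.1.2⟩, h⟩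
      have := csInf_le hSbdd hsS
      have := hs.2
      rw [← hm] at *
      linarith
    have hmono : F m ≤ ∫ s in (0:ℝ)..m, (b + α * K * s) ^ (1 / α - 1) := by
      apply intervalIntegral.integral_mono_ae_restrict hm0.le (hint m hm0.le)
        (hcontRHS m hm0.le)
      rw [Filter.EventuallyLE, MeasureTheory.ae_restrict_iff' measurableSet_Icc]
      have hne : ∀ᵐ (x : ℝ), x ≠ m := by
        rw [MeasureTheory.ae_iff]
        simp only [not_not, Set.setOf_eq_eq_singleton]
        exact measure_singleton m
      filter_upwards [hne] with x hx hxIcc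
      have hxIco : x ∈ Set.Ico (0:ℝ) m := ⟨hxIcc.1, lt_of_le_of_ne hxIcc.2 hx⟩
      have hψφ : f 0 + K * ψ x = φ x := by
        rw [hψdef]
        field_simp
        ring
      have h1 : f x ≤ φ x := by
        have ha := hle x hxIco.1
        have hb2 := hlt x hxIco
        nlinarith
      calc f x ^ (1 - α) ≤ φ x ^ (1 - α) :=
            Real.rpow_le_rpow (hpos x) h1 (by linarith)
        _ = (b + α * K * x) ^ (1 / α - 1) := hφpow x hxIco.1
    rw [hFTC m hm0.le] at hmono
    have hψm : (φ m - φ 0) / K = ψ m - e / K := by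
      rw [hψdef, hφ0]
      field_simp
      ring
    rw [hψm] at hmono
    have h2 := hmS.2
    have : 0 < e / K := div_pos he hK
    linarith
  have hFt := key t ⟨ht, le_refl t⟩
  have hψφt : f 0 + K * ψ t = φ t := by
    rw [hψdef]
    field_simp
    ring
  have := hle t ht
  calc f t ≤ f 0 + K * F t := hle t ht
    _ ≤ f 0 + K * ψ t := by nlinarith
    _ = φ t := hψφt
    _ = ((f 0 + e) ^ α + α * K * t) ^ (1 / α) := by rw [hφdef, hbdef]

theorem stmt_3 (f : ℝ → ℝ) (hf : Measurable f) (hpos : ∀ t, 0 ≤ f t)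
    (K : ℝ) (hK : 0 ≤ K) (α : ℝ) (hα : α ∈ Set.Ioo (0 : ℝ) 1)
    (hint : ∀ t : ℝ, 0 ≤ t → IntervalIntegrable (fun s => f s ^ (1 - α)) volume 0 t)
    (hle : ∀ t : ℝ, 0 ≤ t → f t ≤ f 0 + K * ∫ s in (0:ℝ)..t, f s ^ (1 - α)) :
    ∀ t : ℝ, 0 ≤ t → f t ≤ (f 0 ^ α + α * K * t) ^ (1 / α) := by
  intro t ht
  rcases hK.eq_or_lt with hK0 | hKpos
  · have h := hle t ht
    rw [← hK0] at h ⊢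
    simp only [zero_mul, mul_zero, add_zero] at h ⊢
    have hid : (f 0 ^ α) ^ (1 / α) = f 0 := by
      rw [← Real.rpow_mul (hpos 0), mul_one_div_cancel hα.1.ne', Real.rpow_one]
    rw [hid]
    linarith
  · have hmain : ∀ e : ℝ, 0 < e → f t ≤ ((f 0 + e) ^ α + α * K * t) ^ (1 / α) :=
      fun e he => stmt_3_aux f hpos K hKpos α hα hint hle e he t ht
    have hcont : ContinuousAt (fun e : ℝ => ((f 0 + e) ^ α + α * K * t) ^ (1 / α)) 0 := by
      have c1 : ContinuousAt (fun e : ℝ => f 0 + e) 0 := by fun_prop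
      have c2 : ContinuousAt (fun x : ℝ => x ^ α) ((fun e : ℝ => f 0 + e) 0) :=
        Real.continuousAt_rpow_const _ _ (Or.inr hα.1.le)
      have c3 : ContinuousAt (fun e : ℝ => (f 0 + e) ^ α) 0 := by
        have := c2.comp c1
        simpa [Function.comp_def] using this
      have c4 : ContinuousAt (fun e : ℝ => (f 0 + e) ^ α + α * K * t) 0 :=
        c3.add continuousAt_const
      apply ContinuousAt.rpow_const c4
      exact Or.inr (one_div_pos.mpr hα.1).le
    have htend : Filter.Tendsto (fun e : ℝ => ((f 0 + e) ^ α + α * K * t) ^ (1 / α))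
        (nhdsWithin 0 (Set.Ioi 0)) (nhds ((f 0 ^ α + α * K * t) ^ (1 / α))) := by
      have := hcont.tendsto.mono_left (nhdsWithin_le_nhds (s := Set.Ioi (0:ℝ)))
      simpa using this
    exact ge_of_tendsto htend
      (Filter.eventually_of_mem self_mem_nhdsWithin fun e he => hmain e he)
end

section
/- Under the hypotheses of the Bihari–LaSalle lemma (f measurable nonnegative, f(t) ≤ f(0) + K∫₀ᵗ f(s)^{1-α} ds, α ∈ (0,1), K ≥ 0), one further has f(t) ≤ 2^{1/α - 1} f(0) + (1/2)(2αK)^{1/α} t^{1/α} for all t ≥ 0. -/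
open Real MeasureTheory intervalIntegral

lemma aux_add_rpow_le (x y p : ℝ) (hx : 0 ≤ x) (hy : 0 ≤ y) (hp : 1 ≤ p) :
    (x + y) ^ p ≤ 2 ^ (p - 1) * (x ^ p + y ^ p) := by
  have h := NNReal.rpow_add_le_mul_rpow_add_rpow x.toNNReal y.toNNReal hp
  have h' := NNReal.coe_le_coe.2 h
  push_cast [NNReal.coe_rpow, Real.coe_toNNReal x hx, Real.coe_toNNReal y hy] at h'
  exact h'

theorem stmt_4 (f : ℝ → ℝ) (hf : Measurable f) (hpos : ∀ t, 0 ≤ f t)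
    (K : ℝ) (hK : 0 ≤ K) (α : ℝ) (hα : α ∈ Set.Ioo (0 : ℝ) 1)
    (hint : ∀ t : ℝ, 0 ≤ t → IntervalIntegrable (fun s => f s ^ (1 - α)) volume 0 t)
    (hle : ∀ t : ℝ, 0 ≤ t → f t ≤ f 0 + K * ∫ s in (0:ℝ)..t, f s ^ (1 - α)) :
    ∀ t : ℝ, 0 ≤ t →
      f t ≤ 2 ^ (1 / α - 1) * f 0 + (2 * α * K) ^ (1 / α) / 2 * t ^ (1 / α) := by
  obtain ⟨hα0, hα1⟩ := hα
  set β := 1 / α with hβ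
  have hβ0 : 0 < β := by positivity
  have hβ1 : 1 ≤ β := by rw [hβ, le_div_iff₀ hα0]; linarith
  have hβα : β * α = 1 := by rw [hβ, one_div, inv_mul_cancel₀ hα0.ne']
  have h1α : 0 ≤ 1 - α := by linarith
  intro t ht
  -- globally interval-integrable modification of f ^ (1-α)
  set φ : ℝ → ℝ := fun s => if 0 < s then f s ^ (1 - α) else 0 with hφ
  have hφint : ∀ a b : ℝ, IntervalIntegrable φ volume a b := by
    have h0 : ∀ r : ℝ, IntervalIntegrable φ volume 0 r := by
      intro r
      rcases le_or_gt 0 r with hr | hr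
      · rw [intervalIntegrable_iff_integrableOn_Ioc_of_le hr]
        refine ((((hint r hr).1).mono_set ?_)).congr_fun ?_ measurableSet_Ioc
        · simp [Set.uIoc_of_le hr]
        · intro s hs
          simp [hφ, hs.1]
      · refine IntervalIntegrable.symm ?_
        rw [intervalIntegrable_iff_integrableOn_Ioc_of_le hr.le]
        refine (integrableOn_zero).congr_fun ?_ measurableSet_Ioc
        intro s hs
        simp [hφ, not_lt.2 hs.2]
    intro a b
    exact (h0 a).symm.trans (h0 b)
  have heq : ∀ s : ℝ, 0 ≤ s →
      (∫ x in (0:ℝ)..s, φ x) = ∫ x in (0:ℝ)..s, f x ^ (1 - α) := by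
    intro s hs
    rw [intervalIntegral.integral_of_le hs, intervalIntegral.integral_of_le hs]
    refine setIntegral_congr_fun measurableSet_Ioc ?_
    intro x hx
    simp [hφ, hx.1]
  set h : ℝ → ℝ := fun s => f 0 + K * ∫ x in (0:ℝ)..s, φ x with hh
  have hhcont : Continuous h := by
    exact continuous_const.add
      (continuous_const.mul (intervalIntegral.continuous_primitive hφint 0))
  have hfh : ∀ s : ℝ, 0 ≤ s → f s ≤ h s := by
    intro s hs
    rw [hh]
    simpa [heq s hs] using hle s hs
  have key : ∀ ε : ℝ, 0 < ε → f t ≤ ((f 0 + ε) ^ α + α * K * t) ^ β := by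
    intro ε hε
    set c : ℝ := (f 0 + ε) ^ α with hc
    have hc0 : 0 < c := Real.rpow_pos_of_pos (by linarith [hpos 0]) α
    set g : ℝ → ℝ := fun s => (c + α * K * s) ^ β with hg
    have hbase : ∀ s : ℝ, 0 ≤ s → 0 < c + α * K * s := by
      intro s hs
      nlinarith [mul_nonneg (mul_nonneg hα0.le hK) hs]
    have hgcont : Continuous g := by
      refine Continuous.rpow_const ?_ ?_
      · exact continuous_const.add (continuous_const.mul continuous_id)
      · exact fun x => Or.inr hβ0.le
    have hg0 : g 0 = f 0 + ε := by
      simp only [hg, mul_zero, add_zero, hc, hβ, one_div]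
      exact Real.rpow_rpow_inv (by linarith [hpos 0]) hα0.ne'
    have hβm : β * (1 - α) = β - 1 := by rw [mul_sub, mul_one, hβα]
    have hgpow : ∀ s : ℝ, 0 ≤ s → g s ^ (1 - α) = (c + α * K * s) ^ (β - 1) := by
      intro s hs
      rw [hg, ← Real.rpow_mul (hbase s hs).le, hβm]
    -- FTC : ∫₀ˢ K * (c + αKx)^(β-1) = g s - g 0, for 0 ≤ s
    have hderiv : ∀ s : ℝ, 0 ≤ s → ∀ x ∈ Set.uIcc (0:ℝ) s,
        HasDerivAt g (K * (c + α * K * x) ^ (β - 1)) x := by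
      intro s hs x hx
      rw [Set.uIcc_of_le hs] at hx
      have h1 : HasDerivAt (fun y : ℝ => c + α * K * y) (α * K) x := by
        simpa using ((hasDerivAt_id x).const_mul (α * K)).const_add c
      have h2 := h1.rpow_const (p := β) (Or.inl (hbase x hx.1).ne')
      have hKe : α * K * β = K := by
        rw [mul_right_comm, mul_comm α β, hβα, one_mul]
      have e : K * (c + α * K * x) ^ (β - 1)
          = α * K * β * (c + α * K * x) ^ (β - 1) := by rw [hKe]
      rw [e]
      exact h2
    have hcontOn : ∀ s : ℝ, 0 ≤ s →
        ContinuousOn (fun x => (c + α * K * x) ^ (β - 1)) (Set.uIcc (0:ℝ) s) := by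
      intro s hs
      refine ContinuousOn.rpow_const ?_ ?_
      · exact (continuous_const.add (continuous_const.mul continuous_id)).continuousOn
      · intro x hx
        rw [Set.uIcc_of_le hs] at hx
        exact Or.inl (hbase x hx.1).ne'
    have hFTC : ∀ s : ℝ, 0 ≤ s →
        (∫ x in (0:ℝ)..s, K * (c + α * K * x) ^ (β - 1)) = g s - g 0 := by
      intro s hs
      exact intervalIntegral.integral_eq_sub_of_hasDerivAt (hderiv s hs)
        ((continuousOn_const.mul (hcontOn s hs)).intervalIntegrable)
    -- comparison : h < g on [0, t]
    have claim : ∀ s ∈ Set.Icc (0:ℝ) t, h s < g s := by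
      by_contra hcon
      push_neg at hcon
      obtain ⟨s₀, hs₀, hgs₀⟩ := hcon
      set S : Set ℝ := {s : ℝ | s ∈ Set.Icc 0 t ∧ g s ≤ h s} with hS
      have hSne : S.Nonempty := ⟨s₀, hs₀, hgs₀⟩
      have hSbd : BddBelow S := ⟨0, fun s hs => hs.1.1⟩
      have hScl : IsClosed S := by
        have : S = Set.Icc 0 t ∩ {s | g s ≤ h s} := rfl
        rw [this]
        exact isClosed_Icc.inter (isClosed_le hgcont hhcont)
      set T := sInf S with hT
      have hTS : T ∈ S := hScl.csInf_mem hSne hSbd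
      have hT0 : 0 ≤ T := hTS.1.1
      have hTt : T ≤ t := hTS.1.2
      have hgh : g T ≤ h T := hTS.2
      have hh0 : h 0 = f 0 := by simp [hh]
      have hTpos : 0 < T := by
        rcases hT0.lt_or_eq with hlt | heq0
        · exact hlt
        · exfalso
          rw [← heq0] at hgh
          rw [hh0, hg0] at hgh
          linarith
      -- a.e. comparison on [0, T]
      have hne : ∀ᵐ x : ℝ ∂volume, x ≠ T := by
        rw [ae_iff]
        have : {x : ℝ | ¬x ≠ T} = {T} := by ext x; simp
        rw [this]
        exact measure_singleton T
      have hcmp : (∫ x in (0:ℝ)..T, f x ^ (1 - α))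
          ≤ ∫ x in (0:ℝ)..T, (c + α * K * x) ^ (β - 1) := by
        refine intervalIntegral.integral_mono_ae_restrict hT0 (hint T hT0)
          ((hcontOn T hT0).intervalIntegrable) ?_
        filter_upwards [ae_restrict_mem measurableSet_Icc,
          hne.filter_mono (ae_mono Measure.restrict_le_self)] with x hx hxne
        have hxT : x < T := lt_of_le_of_ne hx.2 hxne
        have hxS : x ∉ S := fun hmem => absurd (csInf_le hSbd hmem) (not_le.2 hxT)
        have hxIcc : x ∈ Set.Icc (0:ℝ) t := ⟨hx.1, le_trans hx.2 hTt⟩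
        have hhg : h x < g x := by
          by_contra hcon2
          exact hxS ⟨hxIcc, not_lt.1 hcon2⟩
        have hfx : f x ≤ g x := le_of_lt (lt_of_le_of_lt (hfh x hx.1) hhg)
        calc f x ^ (1 - α) ≤ g x ^ (1 - α) :=
              Real.rpow_le_rpow (hpos x) hfx h1α
          _ = (c + α * K * x) ^ (β - 1) := hgpow x hx.1
      have hint2 : K * (∫ x in (0:ℝ)..T, (c + α * K * x) ^ (β - 1)) = g T - g 0 := by
        rw [← hFTC T hT0, ← intervalIntegral.integral_const_mul]
      have hhT : h T ≤ g T - ε := by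
        have h1 : h T = f 0 + K * ∫ x in (0:ℝ)..T, f x ^ (1 - α) := by
          show f 0 + K * (∫ x in (0:ℝ)..T, φ x) = _
          rw [heq T hT0]
        have h2 : K * (∫ x in (0:ℝ)..T, f x ^ (1 - α))
            ≤ K * ∫ x in (0:ℝ)..T, (c + α * K * x) ^ (β - 1) :=
          mul_le_mul_of_nonneg_left hcmp hK
        rw [hg0] at hint2
        rw [h1]
        linarith
      linarith
    have hft : f t ≤ h t := hfh t ht
    have := claim t ⟨ht, le_rfl⟩
    calc f t ≤ h t := hft
      _ ≤ g t := le_of_lt this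
      _ = ((f 0 + ε) ^ α + α * K * t) ^ β := rfl
  -- pass to the limit ε → 0⁺
  have main : f t ≤ (f 0 ^ α + α * K * t) ^ β := by
    have hcont : ContinuousAt (fun ε : ℝ => ((f 0 + ε) ^ α + α * K * t) ^ β) 0 := by
      refine ContinuousAt.rpow_const ?_ (Or.inr hβ0.le)
      refine ContinuousAt.add ?_ continuousAt_const
      exact (continuousAt_const.add continuousAt_id).rpow_const (Or.inr hα0.le)
    have htend : Filter.Tendsto (fun ε : ℝ => ((f 0 + ε) ^ α + α * K * t) ^ β)
        (nhdsWithin 0 (Set.Ioi 0)) (nhds ((f 0 ^ α + α * K * t) ^ β)) := by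
      have := hcont.tendsto
      simp only [add_zero] at this
      exact this.mono_left nhdsWithin_le_nhds
    refine ge_of_tendsto htend ?_
    filter_upwards [self_mem_nhdsWithin] with ε hε
    exact key ε hε
  -- final algebra
  have hxy := aux_add_rpow_le (f 0 ^ α) (α * K * t) β
    (Real.rpow_nonneg (hpos 0) α) (by positivity) hβ1
  have e1 : (f 0 ^ α) ^ β = f 0 := by
    rw [hβ, one_div]
    exact Real.rpow_rpow_inv (hpos 0) hα0.ne'
  have e2 : (α * K * t) ^ β = (α * K) ^ β * t ^ β :=
    Real.mul_rpow (by positivity) ht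
  have e3 : (2 * α * K) ^ β = 2 ^ β * (α * K) ^ β := by
    rw [mul_assoc, Real.mul_rpow (by norm_num) (by positivity)]
  have e4 : (2:ℝ) ^ (β - 1) = 2 ^ β / 2 := by
    rw [Real.rpow_sub (by norm_num), Real.rpow_one]
  rw [e1, e2] at hxy
  have : (2:ℝ) ^ (β - 1) * ((α * K) ^ β * t ^ β) = (2 * α * K) ^ β / 2 * t ^ β := by
    rw [e3, e4]; ring
  nlinarith [main, hxy]
end

section
/- For all real p ≥ 2 and all x, y ≥ 0, (x + y)^p ≤ x^p + y^p + Σ_{l=1}^{k_p} C(p,l) (x^l y^{p-l} + x^{p-l} y^l), where k_p = ⌊(p+1)/2⌋ and C(p,l) = p(p−1)···(p−l+1)/l! denotes the generalized binomial coefficient. -/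
open Real Finset

/-- Generalized binomial coefficient `C(p,l) = p(p-1)⋯(p-l+1)/l!` for real `p`. -/
noncomputable def genBinom (p : ℝ) (l : ℕ) : ℝ :=
  (∏ i ∈ Finset.range l, (p - i)) / (Nat.factorial l)

lemma genBinom_zero (p : ℝ) : genBinom p 0 = 1 := by simp [genBinom]

lemma genBinom_succ_mul (q : ℝ) (j : ℕ) :
    ((j : ℝ) + 1) * genBinom q (j + 1) = q * genBinom (q - 1) j := by
  have h1 : ∏ i ∈ Finset.range (j + 1), (q - i) =
      (∏ i ∈ Finset.range j, (q - ((i : ℝ) + 1))) * (q - 0) := by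
    have := Finset.prod_range_succ' (fun k : ℕ => q - (k : ℝ)) j
    push_cast at this ⊢
    exact this
  have h2 : ∏ i ∈ Finset.range j, (q - ((i : ℝ) + 1)) = ∏ i ∈ Finset.range j, (q - 1 - i) := by
    apply Finset.prod_congr rfl; intro i _; ring
  have hf : ((Nat.factorial (j + 1) : ℝ)) = ((j : ℝ) + 1) * Nat.factorial j := by
    rw [Nat.factorial_succ]; push_cast; ring
  unfold genBinom
  rw [h1, h2, hf]
  have hj : (Nat.factorial j : ℝ) ≠ 0 := by positivity
  have hj1 : ((j : ℝ) + 1) ≠ 0 := by positivity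
  field_simp
  ring

lemma genBinom_nonneg {p : ℝ} {l : ℕ} (h : (l : ℝ) ≤ p + 1) : 0 ≤ genBinom p l := by
  unfold genBinom
  apply div_nonneg _ (by positivity)
  apply Finset.prod_nonneg
  intro i hi
  have : (i : ℝ) ≤ (l : ℝ) - 1 := by
    have := Finset.mem_range.mp hi
    have : (i : ℝ) + 1 ≤ l := by exact_mod_cast this
    linarith
  linarith

lemma fact_split {m l : ℕ} (h : m ≤ l) :
    Nat.factorial l = Nat.factorial m * ∏ i ∈ Finset.Ico m l, (i + 1) := by
  induction l, h using Nat.le_induction with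
  | base => simp
  | succ l hml ih =>
    rw [Finset.prod_Ico_succ_top hml, Nat.factorial_succ, ih]
    ring

lemma prod_refl_le {p : ℝ} {n m l : ℕ} (hn : (n : ℝ) ≤ p) (hp1 : p ≤ (n : ℝ) + 1)
    (hml : m + l = n + 1) (hm : m ≤ l) :
    ∏ i ∈ Finset.Ico m l, (p - i) ≤ ∏ i ∈ Finset.Ico m l, ((i : ℝ) + 1) := by
  set A := ∏ i ∈ Finset.Ico m l, (p - (i : ℝ)) with hA
  set B := ∏ i ∈ Finset.Ico m l, ((i : ℝ) + 1) with hB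
  have hfac : ∀ i ∈ Finset.Ico m l, 0 ≤ p - (i : ℝ) := by
    intro i hi
    obtain ⟨h1, h2⟩ := Finset.mem_Ico.mp hi
    have : (i : ℝ) ≤ n := by
      have : i ≤ n := by omega
      exact_mod_cast this
    linarith
  have hA0 : 0 ≤ A := Finset.prod_nonneg hfac
  have hB0 : 0 ≤ B := Finset.prod_nonneg (by intro i _; positivity)
  have hmem : ∀ a ∈ Finset.Ico m l, n - a ∈ Finset.Ico m l := by
    intro a ha; obtain ⟨h1, h2⟩ := Finset.mem_Ico.mp ha
    simp only [Finset.mem_Ico]; omega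
  have hrefl : A = ∏ i ∈ Finset.Ico m l, (p - ((n - i : ℕ) : ℝ)) := by
    apply Finset.prod_nbij' (fun i => n - i) (fun i => n - i) hmem hmem
    · intro a ha; obtain ⟨h1, h2⟩ := Finset.mem_Ico.mp ha; omega
    · intro a ha; obtain ⟨h1, h2⟩ := Finset.mem_Ico.mp ha; omega
    · intro a ha; obtain ⟨h1, h2⟩ := Finset.mem_Ico.mp ha
      have : n - (n - a) = a := by omega
      rw [this]
  have hrefl2 : B = ∏ i ∈ Finset.Ico m l, (((n - i : ℕ) : ℝ) + 1) := by
    apply Finset.prod_nbij' (fun i => n - i) (fun i => n - i) hmem hmem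
    · intro a ha; obtain ⟨h1, h2⟩ := Finset.mem_Ico.mp ha; omega
    · intro a ha; obtain ⟨h1, h2⟩ := Finset.mem_Ico.mp ha; omega
    · intro a ha; obtain ⟨h1, h2⟩ := Finset.mem_Ico.mp ha
      have : n - (n - a) = a := by omega
      rw [this]
  have hsq : A * A ≤ B * B := by
    have e1 : A * A = ∏ i ∈ Finset.Ico m l, ((p - (i : ℝ)) * (p - ((n - i : ℕ) : ℝ))) := by
      nth_rewrite 2 [hrefl]
      rw [hA, ← Finset.prod_mul_distrib]
    have e2 : B * B = ∏ i ∈ Finset.Ico m l, (((i : ℝ) + 1) * (((n - i : ℕ) : ℝ) + 1)) := by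
      nth_rewrite 2 [hrefl2]
      rw [hB, ← Finset.prod_mul_distrib]
    rw [e1, e2]
    apply Finset.prod_le_prod
    · intro i hi
      apply mul_nonneg (hfac i hi)
      obtain ⟨h1, h2⟩ := Finset.mem_Ico.mp hi
      have hin : n - i ≤ n := by omega
      have : ((n - i : ℕ) : ℝ) ≤ n := by exact_mod_cast hin
      linarith
    · intro i hi
      obtain ⟨h1, h2⟩ := Finset.mem_Ico.mp hi
      have hiln : i ≤ n := by omega
      have hc : ((n - i : ℕ) : ℝ) = (n : ℝ) - i := by
        push_cast [Nat.cast_sub hiln]; ring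
      rw [hc]
      have hi0 : (0 : ℝ) ≤ i := by positivity
      have hin : (i : ℝ) ≤ n := by exact_mod_cast hiln
      nlinarith
  nlinarith

lemma genBinom_le {p : ℝ} {n m l : ℕ} (hn : (n : ℝ) ≤ p) (hp1 : p ≤ (n : ℝ) + 1)
    (hml : m + l = n + 1) (hm : m ≤ l) :
    genBinom p l ≤ genBinom p m := by
  have hml' : m ≤ l := hm
  have hP : ∏ i ∈ Finset.range l, (p - (i : ℝ)) =
      (∏ i ∈ Finset.range m, (p - i)) * ∏ i ∈ Finset.Ico m l, (p - i) :=
    (Finset.prod_range_mul_prod_Ico _ hm).symm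
  have hF : (Nat.factorial l : ℝ) =
      (Nat.factorial m : ℝ) * ∏ i ∈ Finset.Ico m l, ((i : ℝ) + 1) := by
    rw [fact_split hm]
    push_cast
    ring
  set P := ∏ i ∈ Finset.range m, (p - (i : ℝ))
  set A := ∏ i ∈ Finset.Ico m l, (p - (i : ℝ))
  set B := ∏ i ∈ Finset.Ico m l, ((i : ℝ) + 1)
  have hP0 : 0 ≤ P := by
    apply Finset.prod_nonneg
    intro i hi
    have := Finset.mem_range.mp hi
    have : (i : ℝ) ≤ n := by
      have : i ≤ n := by omega
      exact_mod_cast this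
    linarith
  have hA0 : 0 ≤ A := by
    apply Finset.prod_nonneg
    intro i hi
    obtain ⟨h1, h2⟩ := Finset.mem_Ico.mp hi
    have : (i : ℝ) ≤ n := by
      have : i ≤ n := by omega
      exact_mod_cast this
    linarith
  have hB0 : 0 < B := Finset.prod_pos (by intro i _; positivity)
  have hAB : A ≤ B := prod_refl_le hn hp1 hml hm
  have hm0 : (0 : ℝ) < Nat.factorial m := by positivity
  unfold genBinom
  rw [hP, hF]
  rw [div_le_div_iff₀ (by positivity) hm0]
  calc P * A * (Nat.factorial m : ℝ) ≤ P * B * (Nat.factorial m : ℝ) := by gcongr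
    _ = P * ((Nat.factorial m : ℝ) * B) := by ring

lemma key : ∀ (N : ℕ) (q : ℝ), (N : ℝ) - 1 ≤ q → q ≤ N → ∀ t : ℝ, 0 ≤ t →
    (1 + t) ^ q ≤ ∑ l ∈ Finset.range (N + 1), genBinom q l * t ^ l := by
  intro N
  induction N with
  | zero =>
    intro q _ hq2 t ht
    simp only [Nat.cast_zero] at hq2
    have : (1 + t) ^ q ≤ 1 := Real.rpow_le_one_of_one_le_of_nonpos (by linarith) hq2
    simpa [genBinom_zero] using this
  | succ N ih =>
    intro q hq1 hq2 t ht
    push_cast at hq1 hq2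
    have hqN : (N : ℝ) ≤ q := by linarith
    have hq0 : 0 ≤ q := le_trans (by positivity) hqN
    set F : ℝ → ℝ := fun s => (∑ l ∈ Finset.range (N + 2), genBinom q l * s ^ l) - (1 + s) ^ q
      with hF
    have hF0 : F 0 = 0 := by
      simp [hF, Finset.sum_range_succ', genBinom_zero]
    have hderiv : ∀ s : ℝ, 0 ≤ s → HasDerivAt F
        (q * ((∑ j ∈ Finset.range (N + 1), genBinom (q - 1) j * s ^ j) - (1 + s) ^ (q - 1))) s := by
      intro s hs
      have h1 : HasDerivAt (fun s : ℝ => ∑ l ∈ Finset.range (N + 2), genBinom q l * s ^ l)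
          (∑ l ∈ Finset.range (N + 2), genBinom q l * ((l : ℝ) * s ^ (l - 1))) s :=
        HasDerivAt.fun_sum fun l _ => (hasDerivAt_pow l s).const_mul _
      have h2 : HasDerivAt (fun s : ℝ => (1 + s) ^ q) (1 * q * (1 + s) ^ (q - 1)) s := by
        exact ((hasDerivAt_id s).const_add 1).rpow_const (Or.inl (by positivity))
      have hid : ∑ l ∈ Finset.range (N + 2), genBinom q l * ((l : ℝ) * s ^ (l - 1)) =
          q * ∑ j ∈ Finset.range (N + 1), genBinom (q - 1) j * s ^ j := by
        rw [Finset.sum_range_succ']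
        simp only [Nat.cast_zero, Nat.cast_add, Nat.cast_one, zero_mul, mul_zero, add_zero,
          Nat.add_sub_cancel]
        rw [Finset.mul_sum]
        apply Finset.sum_congr rfl
        intro j _
        have h := genBinom_succ_mul q j
        calc genBinom q (j + 1) * (((j : ℝ) + 1) * s ^ j)
            = (((j : ℝ) + 1) * genBinom q (j + 1)) * s ^ j := by ring
          _ = q * (genBinom (q - 1) j * s ^ j) := by rw [h]; ring
      have := h1.fun_sub h2
      rw [hid] at this
      rw [show q * ((∑ j ∈ Finset.range (N + 1), genBinom (q - 1) j * s ^ j) - (1 + s) ^ (q - 1)) =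
          q * (∑ j ∈ Finset.range (N + 1), genBinom (q - 1) j * s ^ j) - 1 * q * (1 + s) ^ (q - 1) by ring]
      exact this
    have hmono : MonotoneOn F (Set.Ici (0 : ℝ)) := by
      apply monotoneOn_of_deriv_nonneg (convex_Ici 0)
      · apply ContinuousOn.sub
        · exact (Continuous.continuousOn (by continuity))
        · apply ContinuousOn.rpow_const
          · exact Continuous.continuousOn (by continuity)
          · intro s hs
            left
            have : (0 : ℝ) ≤ s := hs
            positivity
      · rw [interior_Ici]
        intro s hs
        exact ((hderiv s (le_of_lt hs)).differentiableAt).differentiableWithinAt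
      · rw [interior_Ici]
        intro s hs
        rw [(hderiv s (le_of_lt hs)).deriv]
        apply mul_nonneg hq0
        rw [sub_nonneg]
        exact ih (q - 1) (by linarith) (by linarith) s (le_of_lt hs)
    have hle : F 0 ≤ F t := hmono (Set.mem_Ici.mpr le_rfl) (Set.mem_Ici.mpr ht) ht
    rw [hF0] at hle
    have : 0 ≤ (∑ l ∈ Finset.range (N + 2), genBinom q l * t ^ l) - (1 + t) ^ q := hle
    linarith

lemma main_t {p : ℝ} (hp : 2 ≤ p) {t : ℝ} (ht0 : 0 < t) (ht1 : t ≤ 1) :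
    (1 + t) ^ p ≤ 1 + t ^ p +
      ∑ l ∈ Finset.Icc 1 (⌊(p + 1) / 2⌋₊), genBinom p l * (t ^ (l : ℝ) + t ^ (p - l)) := by
  set n := ⌊p⌋₊ with hn
  set k := ⌊(p + 1) / 2⌋₊ with hk
  have hp0 : (0 : ℝ) ≤ p := by linarith
  have hn1 : (n : ℝ) ≤ p := Nat.floor_le hp0
  have hn2 : p < (n : ℝ) + 1 := Nat.lt_floor_add_one p
  have hk1 : 1 ≤ k := Nat.le_floor (by push_cast; linarith)
  have hkp : (k : ℝ) ≤ (p + 1) / 2 := Nat.floor_le (by linarith)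
  have hkn : k ≤ n := Nat.le_floor (by linarith)
  have hkp2 : (p + 1) / 2 < (k : ℝ) + 1 := Nat.lt_floor_add_one _
  have h2k : n ≤ 2 * k := by
    have : (n : ℝ) < 2 * k + 1 := by linarith
    have : n < 2 * k + 1 := by exact_mod_cast this
    omega
  have ht0' : (0 : ℝ) ≤ t := le_of_lt ht0
  -- Step 1
  have step1 : (1 + t) ^ p ≤ ∑ l ∈ Finset.range (n + 2), genBinom p l * t ^ l := by
    have := key (n + 1) p (by push_cast; linarith) (by push_cast; linarith) t ht0'
    simpa using this
  -- split the sum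
  have split : ∑ l ∈ Finset.range (n + 2), genBinom p l * t ^ l =
      (∑ l ∈ Finset.range (k + 1), genBinom p l * t ^ l) +
      ∑ l ∈ Finset.Ico (k + 1) (n + 2), genBinom p l * t ^ l :=
    (Finset.sum_range_add_sum_Ico _ (by omega)).symm
  -- head part
  have head : ∑ l ∈ Finset.range (k + 1), genBinom p l * t ^ l =
      1 + ∑ l ∈ Finset.Icc 1 k, genBinom p l * t ^ (l : ℝ) := by
    rw [Finset.range_eq_Ico, Finset.sum_eq_sum_Ico_succ_bot (by omega)]
    rw [show Finset.Ico 1 (k + 1) = Finset.Icc 1 k from rfl]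
    rw [genBinom_zero]
    congr 1
    · norm_num
    · apply Finset.sum_congr rfl
      intro l _
      rw [Real.rpow_natCast]
  -- termwise domination of tail
  have tail1 : ∑ l ∈ Finset.Ico (k + 1) (n + 2), genBinom p l * t ^ l ≤
      ∑ l ∈ Finset.Ico (k + 1) (n + 2), genBinom p (n + 1 - l) * t ^ (p - ((n + 1 - l : ℕ) : ℝ)) := by
    apply Finset.sum_le_sum
    intro l hl
    obtain ⟨hl1, hl2⟩ := Finset.mem_Ico.mp hl
    set m := n + 1 - l with hm
    have hml : m + l = n + 1 := by omega
    have hmle : m ≤ l := by omega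
    have hmn : m ≤ n := by omega
    have hcoef : genBinom p l ≤ genBinom p m := genBinom_le hn1 (le_of_lt hn2) hml hmle
    have hmcast : ((m : ℝ)) ≤ (n : ℝ) := by exact_mod_cast hmn
    have hgm : 0 ≤ genBinom p m := genBinom_nonneg (by linarith)
    have hexp : t ^ l ≤ t ^ (p - (m : ℝ)) := by
      rw [← Real.rpow_natCast t l]
      apply Real.rpow_le_rpow_of_exponent_ge ht0 ht1
      have hlcast : (m : ℝ) + (l : ℝ) = (n : ℝ) + 1 := by exact_mod_cast hml
      linarith
    exact mul_le_mul hcoef hexp (by positivity) hgm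
  -- reindex
  have tail2 : ∑ l ∈ Finset.Ico (k + 1) (n + 2), genBinom p (n + 1 - l) * t ^ (p - ((n + 1 - l : ℕ) : ℝ)) =
      ∑ m ∈ Finset.range (n + 1 - k), genBinom p m * t ^ (p - (m : ℝ)) := by
    rw [Finset.range_eq_Ico]
    apply Finset.sum_nbij' (fun l => n + 1 - l) (fun m => n + 1 - m)
    · intro a ha; obtain ⟨h1, h2⟩ := Finset.mem_Ico.mp ha; simp only [Finset.mem_Ico]; omega
    · intro a ha; obtain ⟨h1, h2⟩ := Finset.mem_Ico.mp ha; simp only [Finset.mem_Ico]; omega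
    · intro a ha; obtain ⟨h1, h2⟩ := Finset.mem_Ico.mp ha; omega
    · intro a ha; obtain ⟨h1, h2⟩ := Finset.mem_Ico.mp ha; omega
    · intro a _; rfl
  -- enlarge index set
  have tail3 : ∑ m ∈ Finset.range (n + 1 - k), genBinom p m * t ^ (p - (m : ℝ)) ≤
      ∑ m ∈ Finset.range (k + 1), genBinom p m * t ^ (p - (m : ℝ)) := by
    apply Finset.sum_le_sum_of_subset_of_nonneg (Finset.range_subset_range.mpr (by omega))
    intro m hm _
    have hmk : m ≤ k := by
      have := Finset.mem_range.mp hm; omega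
    have : (m : ℝ) ≤ p + 1 := by
      have h1 : (m : ℝ) ≤ k := by exact_mod_cast hmk
      linarith
    have := genBinom_nonneg this
    positivity
  -- final head of the reflected sum
  have tail4 : ∑ m ∈ Finset.range (k + 1), genBinom p m * t ^ (p - (m : ℝ)) =
      t ^ p + ∑ l ∈ Finset.Icc 1 k, genBinom p l * t ^ (p - (l : ℝ)) := by
    rw [Finset.range_eq_Ico, Finset.sum_eq_sum_Ico_succ_bot (by omega)]
    rw [show Finset.Ico 1 (k + 1) = Finset.Icc 1 k from rfl]
    rw [genBinom_zero]
    norm_num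
  have expand : ∑ l ∈ Finset.Icc 1 k, genBinom p l * (t ^ (l : ℝ) + t ^ (p - (l : ℝ))) =
      (∑ l ∈ Finset.Icc 1 k, genBinom p l * t ^ (l : ℝ)) +
      ∑ l ∈ Finset.Icc 1 k, genBinom p l * t ^ (p - (l : ℝ)) := by
    rw [← Finset.sum_add_distrib]
    apply Finset.sum_congr rfl
    intro l _
    ring
  rw [expand]
  calc (1 + t) ^ p ≤ ∑ l ∈ Finset.range (n + 2), genBinom p l * t ^ l := step1
    _ = (∑ l ∈ Finset.range (k + 1), genBinom p l * t ^ l) +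
        ∑ l ∈ Finset.Ico (k + 1) (n + 2), genBinom p l * t ^ l := split
    _ ≤ (∑ l ∈ Finset.range (k + 1), genBinom p l * t ^ l) +
        (t ^ p + ∑ l ∈ Finset.Icc 1 k, genBinom p l * t ^ (p - (l : ℝ))) := by
        rw [← tail4]
        have := le_trans tail1 (le_of_eq tail2)
        linarith [le_trans this tail3]
    _ = 1 + t ^ p + ((∑ l ∈ Finset.Icc 1 k, genBinom p l * t ^ (l : ℝ)) +
        ∑ l ∈ Finset.Icc 1 k, genBinom p l * t ^ (p - (l : ℝ))) := by
        rw [head]; ring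

lemma main_xy {p : ℝ} (hp : 2 ≤ p) {x y : ℝ} (hx : 0 < x) (hy : 0 < y) (hyx : y ≤ x) :
    (x + y) ^ p ≤ x ^ p + y ^ p +
      ∑ l ∈ Finset.Icc 1 (⌊(p + 1) / 2⌋₊),
        genBinom p l * (x ^ (l : ℝ) * y ^ (p - l) + x ^ (p - l) * y ^ (l : ℝ)) := by
  set t := y / x with htdef
  have ht0 : 0 < t := div_pos hy hx
  have ht1 : t ≤ 1 := (div_le_one hx).mpr hyx
  have H := main_t hp ht0 ht1
  have hxp : (0 : ℝ) < x ^ p := Real.rpow_pos_of_pos hx p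
  have key1 : ∀ c : ℝ, x ^ p * t ^ c = x ^ (p - c) * y ^ c := by
    intro c
    rw [htdef, Real.div_rpow hy.le hx.le, Real.rpow_sub hx]
    have : x ^ c ≠ 0 := (Real.rpow_pos_of_pos hx c).ne'
    field_simp
  have hLHS : (x + y) ^ p = x ^ p * (1 + t) ^ p := by
    rw [← Real.mul_rpow hx.le (by positivity)]
    congr 1
    rw [htdef]
    field_simp
  rw [hLHS]
  calc x ^ p * (1 + t) ^ p
      ≤ x ^ p * (1 + t ^ p +
          ∑ l ∈ Finset.Icc 1 (⌊(p + 1) / 2⌋₊), genBinom p l * (t ^ (l : ℝ) + t ^ (p - l))) :=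
        mul_le_mul_of_nonneg_left H hxp.le
    _ = x ^ p + y ^ p +
        ∑ l ∈ Finset.Icc 1 (⌊(p + 1) / 2⌋₊),
          genBinom p l * (x ^ (l : ℝ) * y ^ (p - l) + x ^ (p - l) * y ^ (l : ℝ)) := by
        rw [mul_add, mul_add, Finset.mul_sum]
        have hyp : x ^ p * t ^ p = y ^ p := by
          rw [key1 p, sub_self, Real.rpow_zero, one_mul]
        rw [hyp, mul_one]
        congr 1
        apply Finset.sum_congr rfl
        intro l _
        have e1 : x ^ p * t ^ (l : ℝ) = x ^ (p - l) * y ^ (l : ℝ) := key1 l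
        have e2 : x ^ p * t ^ (p - l) = x ^ (l : ℝ) * y ^ (p - l) := by
          have := key1 (p - l)
          rw [this]
          congr 2
          ring
        calc x ^ p * (genBinom p l * (t ^ (l : ℝ) + t ^ (p - l)))
            = genBinom p l * (x ^ p * t ^ (l : ℝ) + x ^ p * t ^ (p - l)) := by ring
          _ = genBinom p l * (x ^ (l : ℝ) * y ^ (p - l) + x ^ (p - l) * y ^ (l : ℝ)) := by
              rw [e1, e2]; ring

theorem stmt_8 (p : ℝ) (hp : 2 ≤ p) (x y : ℝ) (hx : 0 ≤ x) (hy : 0 ≤ y) :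
    (x + y) ^ p ≤ x ^ p + y ^ p +
      ∑ l ∈ Finset.Icc 1 (⌊(p + 1) / 2⌋₊),
        genBinom p l * (x ^ (l : ℝ) * y ^ (p - l) + x ^ (p - l) * y ^ (l : ℝ)) := by
  have hkp : ((⌊(p + 1) / 2⌋₊ : ℕ) : ℝ) ≤ (p + 1) / 2 := Nat.floor_le (by linarith)
  have hzero : ∀ z : ℝ, 0 ≤ z →
      ∑ l ∈ Finset.Icc 1 (⌊(p + 1) / 2⌋₊),
        genBinom p l * (z ^ (l : ℝ) * (0:ℝ) ^ (p - l) + z ^ (p - l) * (0:ℝ) ^ (l : ℝ)) = 0 := by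
    intro z _
    apply Finset.sum_eq_zero
    intro l hl
    obtain ⟨hl1, hl2⟩ := Finset.mem_Icc.mp hl
    have hlc : (l : ℝ) ≤ (p + 1) / 2 := le_trans (by exact_mod_cast hl2) hkp
    have h1 : p - (l : ℝ) ≠ 0 := by
      have : (0:ℝ) < p - l := by linarith
      linarith
    have h2 : ((l : ℝ)) ≠ 0 := by
      have : (1 : ℝ) ≤ l := by exact_mod_cast hl1
      linarith
    rw [Real.zero_rpow h1, Real.zero_rpow h2]
    ring
  rcases eq_or_lt_of_le hy with hy0 | hy0
  · rw [← hy0, hzero x hx, Real.zero_rpow (by positivity : p ≠ 0)]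
    simp
  · rcases eq_or_lt_of_le hx with hx0 | hx0
    · rw [← hx0]
      have hsum : ∑ l ∈ Finset.Icc 1 (⌊(p + 1) / 2⌋₊),
          genBinom p l * ((0:ℝ) ^ (l : ℝ) * y ^ (p - l) + (0:ℝ) ^ (p - l) * y ^ (l : ℝ)) = 0 := by
        calc ∑ l ∈ Finset.Icc 1 (⌊(p + 1) / 2⌋₊),
            genBinom p l * ((0:ℝ) ^ (l : ℝ) * y ^ (p - l) + (0:ℝ) ^ (p - l) * y ^ (l : ℝ))
            = ∑ l ∈ Finset.Icc 1 (⌊(p + 1) / 2⌋₊),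
              genBinom p l * (y ^ (l : ℝ) * (0:ℝ) ^ (p - l) + y ^ (p - l) * (0:ℝ) ^ (l : ℝ)) :=
            Finset.sum_congr rfl (fun l _ => by ring)
          _ = 0 := hzero y hy
      rw [hsum, Real.zero_rpow (by positivity : p ≠ 0)]
      simp
    · rcases le_total y x with hyx | hxy
      · exact main_xy hp hx0 hy0 hyx
      · have H := main_xy hp hy0 hx0 hxy
        have hsum : ∑ l ∈ Finset.Icc 1 (⌊(p + 1) / 2⌋₊),
            genBinom p l * (y ^ (l : ℝ) * x ^ (p - l) + y ^ (p - l) * x ^ (l : ℝ)) =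
            ∑ l ∈ Finset.Icc 1 (⌊(p + 1) / 2⌋₊),
            genBinom p l * (x ^ (l : ℝ) * y ^ (p - l) + x ^ (p - l) * y ^ (l : ℝ)) :=
          Finset.sum_congr rfl (fun l _ => by ring)
        rw [add_comm x y]
        rw [hsum] at H
        linarith
end
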